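/- Let N ≥ 1, τ ∈ (0,1], and x₁, …, x_N ∈ [0,1], and let x₍₁₎ ≤ x₍₂₎ ≤ … ≤ x₍N₎ be their nondecreasing rearrangement. Then the maximum over b ∈ [0,1] of the empirical CVaR objective b − (1/(Nτ)) Σ_{i=1}^N (b − x_i)⁺ is attained at b = x₍⌈Nτ⌉₎, and its value equals (1 − ⌈Nτ⌉/(Nτ))·x₍⌈Nτ⌉₎ + (1/(Nτ)) Σ_{i=1}^{⌈Nτ⌉} x₍ᵢ₎. -/

import Mathlib

open MeasureTheory Finset

/-- The empirical CVaR objective `b ↦ b − (1/(Nτ)) Σᵢ (b − xᵢ)⁺` over `b ∈ [0,1]` attains its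
maximum at the empirical quantile `x₍⌈Nτ⌉₎` (the `⌈Nτ⌉`-th smallest data point, here
`y (⌈Nτ⌉ - 1)` for the 0-indexed nondecreasing rearrangement `y`), and the maximal value is
`(1 − ⌈Nτ⌉/(Nτ))·x₍⌈Nτ⌉₎ + (1/(Nτ)) Σ_{i=1}^{⌈Nτ⌉} x₍ᵢ₎`. -/
theorem empirical_cvar_characterization (N : ℕ) (hN : 1 ≤ N)
    (τ : ℝ) (hτ : τ ∈ Set.Ioc (0:ℝ) 1)
    (x : Fin N → ℝ) (hx : ∀ i, x i ∈ Set.Icc (0:ℝ) 1)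
    (y : ℕ → ℝ) (hperm : ∃ σ : Equiv.Perm (Fin N), ∀ i : Fin N, y i = x (σ i))
    (hsorted : ∀ i j : ℕ, i ≤ j → j < N → y i ≤ y j) :
    IsMaxOn (fun b => b - (1/(N*τ)) * ∑ i : Fin N, max (b - x i) 0) (Set.Icc (0:ℝ) 1)
      (y (⌈(N:ℝ)*τ⌉₊ - 1)) ∧
    y (⌈(N:ℝ)*τ⌉₊ - 1) - (1/(N*τ)) * ∑ i : Fin N, max (y (⌈(N:ℝ)*τ⌉₊ - 1) - x i) 0
      = (1 - (⌈(N:ℝ)*τ⌉₊ : ℝ)/(N*τ)) * y (⌈(N:ℝ)*τ⌉₊ - 1)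
        + (1/(N*τ)) * ∑ i ∈ Finset.range ⌈(N:ℝ)*τ⌉₊, y i := by
  obtain ⟨hτ0, hτ1⟩ := hτ
  obtain ⟨σ, hσ⟩ := hperm
  have hN0 : (0:ℝ) < N := by exact_mod_cast hN
  have hNτpos : (0:ℝ) < N * τ := mul_pos hN0 hτ0
  set k := ⌈(N:ℝ)*τ⌉₊ with hkdef
  have hk1 : 1 ≤ k := Nat.one_le_ceil_iff.mpr hNτpos
  have hkN : k ≤ N := Nat.ceil_le.mpr (by nlinarith)
  have hkge : (N:ℝ)*τ ≤ k := Nat.le_ceil _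
  have hklt : ((k:ℝ) - 1) < N*τ := by
    have h := (Nat.lt_ceil (n := k-1) (a := (N:ℝ)*τ)).mp (Nat.sub_lt hk1 one_pos)
    rwa [Nat.cast_sub hk1, Nat.cast_one] at h
  set q := y (k - 1) with hqdef
  have hkm1N : k - 1 < N := lt_of_lt_of_le (Nat.sub_lt hk1 one_pos) hkN
  have hyq : ∀ i, i < k → y i ≤ q := fun i hi =>
    hsorted i (k-1) (Nat.le_sub_one_of_lt hi) hkm1N
  have hqy : ∀ i, k - 1 ≤ i → i < N → q ≤ y i := fun i h1 h2 => hsorted (k-1) i h1 h2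
  -- rewrite sums in terms of y
  have hsum : ∀ b : ℝ, ∑ i : Fin N, max (b - x i) 0
      = ∑ i ∈ Finset.range N, max (b - y i) 0 := by
    intro b
    rw [← Equiv.sum_comp σ (fun i => max (b - x i) 0), ← Fin.sum_univ_eq_sum_range]
    exact Finset.sum_congr rfl fun i _ => by rw [hσ i]
  -- closed form for the sum at q
  have hSq : ∑ i ∈ Finset.range N, max (q - y i) 0
      = k * q - ∑ i ∈ Finset.range k, y i := by
    rw [← Finset.sum_range_add_sum_Ico _ hkN]
    have h1 : ∑ i ∈ Finset.range k, max (q - y i) 0 = ∑ i ∈ Finset.range k, (q - y i) :=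
      Finset.sum_congr rfl fun i hi =>
        max_eq_left (sub_nonneg.mpr (hyq i (Finset.mem_range.mp hi)))
    have h2 : ∑ i ∈ Finset.Ico k N, max (q - y i) 0 = 0 :=
      Finset.sum_eq_zero fun i hi => by
        have hi' := Finset.mem_Ico.mp hi
        exact max_eq_right (sub_nonpos.mpr (hqy i (le_trans (Nat.sub_le k 1) hi'.1) hi'.2))
    rw [h1, h2, add_zero, Finset.sum_sub_distrib, Finset.sum_const, Finset.card_range,
      nsmul_eq_mul]
  set c := 1/((N:ℝ)*τ) with hcdef
  have hc : 0 < c := by positivity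
  have hcN : c * ((N:ℝ)*τ) = 1 := one_div_mul_cancel (ne_of_gt hNτpos)
  -- key maximality inequality
  have key : ∀ b ∈ Set.Icc (0:ℝ) 1,
      b - c * ∑ i ∈ Finset.range N, max (b - y i) 0
        ≤ q - c * ∑ i ∈ Finset.range N, max (q - y i) 0 := by
    intro b _
    set Sb := ∑ i ∈ Finset.range N, max (b - y i) 0 with hSbdef
    set Sq := ∑ i ∈ Finset.range N, max (q - y i) 0 with hSqdef
    rcases le_total q b with hqb | hbq
    · have hbd : Sq + k * (b - q) ≤ Sb := by
        have hsplit1 : Sb = ∑ i ∈ Finset.range k, max (b - y i) 0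
            + ∑ i ∈ Finset.Ico k N, max (b - y i) 0 := by
          rw [hSbdef, ← Finset.sum_range_add_sum_Ico _ hkN]
        have hsplit2 : Sq = ∑ i ∈ Finset.range k, max (q - y i) 0
            + ∑ i ∈ Finset.Ico k N, max (q - y i) 0 := by
          rw [hSqdef, ← Finset.sum_range_add_sum_Ico _ hkN]
        have h1 : ∑ i ∈ Finset.range k, max (q - y i) 0 + k * (b - q)
            ≤ ∑ i ∈ Finset.range k, max (b - y i) 0 := by
          have : ∀ i ∈ Finset.range k, max (q - y i) 0 + (b - q) ≤ max (b - y i) 0 := by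
            intro i hi
            have hyiq := hyq i (Finset.mem_range.mp hi)
            have e1 : max (q - y i) 0 = q - y i := max_eq_left (by linarith)
            have e2 : max (b - y i) 0 = b - y i := max_eq_left (by linarith)
            rw [e1, e2]; ring_nf; linarith
          calc ∑ i ∈ Finset.range k, max (q - y i) 0 + k * (b - q)
              = ∑ i ∈ Finset.range k, (max (q - y i) 0 + (b - q)) := by
                rw [Finset.sum_add_distrib, Finset.sum_const, Finset.card_range, nsmul_eq_mul]
            _ ≤ ∑ i ∈ Finset.range k, max (b - y i) 0 := Finset.sum_le_sum this
        have h2 : ∑ i ∈ Finset.Ico k N, max (q - y i) 0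
            ≤ ∑ i ∈ Finset.Ico k N, max (b - y i) 0 :=
          Finset.sum_le_sum fun i _ => max_le_max (by linarith) le_rfl
        rw [hsplit1, hsplit2]; linarith
      have h3 : ((N:ℝ)*τ) * (b - q) ≤ (k:ℝ) * (b - q) :=
        mul_le_mul_of_nonneg_right hkge (by linarith)
      nlinarith [mul_le_mul_of_nonneg_left hbd (le_of_lt hc), hcN]
    · have hkm1N' : k - 1 ≤ N := le_trans (Nat.sub_le k 1) hkN
      have hbd : Sq ≤ Sb + ((k:ℝ) - 1) * (q - b) := by
        have hsplit1 : Sb = ∑ i ∈ Finset.range (k-1), max (b - y i) 0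
            + ∑ i ∈ Finset.Ico (k-1) N, max (b - y i) 0 := by
          rw [hSbdef, ← Finset.sum_range_add_sum_Ico _ hkm1N']
        have hsplit2 : Sq = ∑ i ∈ Finset.range (k-1), max (q - y i) 0
            + ∑ i ∈ Finset.Ico (k-1) N, max (q - y i) 0 := by
          rw [hSqdef, ← Finset.sum_range_add_sum_Ico _ hkm1N']
        have h1 : ∑ i ∈ Finset.range (k-1), max (q - y i) 0
            ≤ ∑ i ∈ Finset.range (k-1), max (b - y i) 0 + ((k:ℝ) - 1) * (q - b) := by
          have hterm : ∀ i ∈ Finset.range (k-1),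
              max (q - y i) 0 ≤ max (b - y i) 0 + (q - b) := by
            intro i hi
            have hik : i < k := lt_of_lt_of_le (Finset.mem_range.mp hi) (Nat.sub_le k 1)
            have hyiq := hyq i hik
            have e1 : max (q - y i) 0 = q - y i := max_eq_left (by linarith)
            rw [e1]
            have : b - y i ≤ max (b - y i) 0 := le_max_left _ _
            linarith
          have hcast : ((k - 1 : ℕ) : ℝ) = (k:ℝ) - 1 := by
            rw [Nat.cast_sub hk1, Nat.cast_one]
          calc ∑ i ∈ Finset.range (k-1), max (q - y i) 0
              ≤ ∑ i ∈ Finset.range (k-1), (max (b - y i) 0 + (q - b)) :=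
                Finset.sum_le_sum hterm
            _ = ∑ i ∈ Finset.range (k-1), max (b - y i) 0 + ((k:ℝ) - 1) * (q - b) := by
                rw [Finset.sum_add_distrib, Finset.sum_const, Finset.card_range,
                  nsmul_eq_mul, hcast]
        have h2 : ∑ i ∈ Finset.Ico (k-1) N, max (q - y i) 0
            ≤ ∑ i ∈ Finset.Ico (k-1) N, max (b - y i) 0 :=
          Finset.sum_le_sum fun i hi => by
            have hi' := Finset.mem_Ico.mp hi
            have := hqy i hi'.1 hi'.2
            have e1 : max (q - y i) 0 = 0 := max_eq_right (by linarith)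
            rw [e1]; exact le_max_right _ _
        rw [hsplit1, hsplit2]; linarith
      have h3 : ((k:ℝ) - 1) * (q - b) ≤ ((N:ℝ)*τ) * (q - b) :=
        mul_le_mul_of_nonneg_right (le_of_lt hklt) (by linarith)
      nlinarith [mul_le_mul_of_nonneg_left hbd (le_of_lt hc), hcN]
  constructor
  · rw [isMaxOn_iff]
    intro b hb
    show b - 1/((N:ℝ)*τ) * ∑ i : Fin N, max (b - x i) 0 ≤ _
    rw [hsum b, hsum q]
    exact key b hb
  · rw [hsum q, hSq]
    have : (k:ℝ)/((N:ℝ)*τ) = (k:ℝ) * c := by rw [hcdef]; ring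
    rw [this]
    ring
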